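/- In a k-x-basic read-once formula, if a vertex u is labeled by an unforceable gate (not ∧, ∨, or a variable) and σ is ε-far from making Φ_u evaluate to b, then u has at least two heavy children. -/

import Mathlib

/-- Read-once formula trees over variable set `X`: leaves are variables (possibly
negated), internal nodes are `∧`/`∨` gates of unbounded arity or general Boolean
gates given by a function on the list of children values. -/
inductive Fla (X : Type) where
  | leaf : X → Fla X
  | neg : X → Fla X
  | and : List (Fla X) → Fla X
  | or : List (Fla X) → Fla X
  | gate : (List Bool → Bool) → List (Fla X) → Fla X

namespace Fla
variable {X : Type}

/-- Evaluation of a formula under an assignment. -/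
def eval (σ : X → Bool) : Fla X → Bool
  | leaf x => σ x
  | neg x => !σ x
  | and l => l.attach.all (fun ⟨φ, _⟩ => eval σ φ)
  | or l => l.attach.any (fun ⟨φ, _⟩ => eval σ φ)
  | gate f l => f (l.attach.map (fun ⟨φ, _⟩ => eval σ φ))

/-- The list of variables occurring in a formula (with multiplicity). -/
def vars : Fla X → List X
  | leaf x => [x]
  | neg x => [x]
  | and l => l.attach.flatMap (fun ⟨φ, _⟩ => vars φ)
  | or l => l.attach.flatMap (fun ⟨φ, _⟩ => vars φ)
  | gate _ l => l.attach.flatMap (fun ⟨φ, _⟩ => vars φ)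

/-- The size `|Φ|` of a formula: the number of (occurrences of) variables. -/
def size (φ : Fla X) : ℕ := (vars φ).length

/-- A formula is read-once when no variable occurs twice. -/
def ReadOnce (φ : Fla X) : Prop := (vars φ).Nodup

/-- Relative Hamming distance between two assignments, measured over the
variables of `φ`. -/
noncomputable def hamming (φ : Fla X) (σ σ' : X → Bool) : ℝ :=
  ((vars φ).countP (fun x => σ x != σ' x) : ℝ) / (size φ : ℝ)

/-- `σ` is `ε`-far from making `φ` evaluate to `b`. -/
def EpsFar (φ : Fla X) (b : Bool) (σ : X → Bool) (ε : ℝ) : Prop :=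
  ∀ σ', eval σ' φ = b → ε ≤ hamming φ σ σ'

/-- `σ` is `ε`-close to making `φ` evaluate to `b`. -/
def EpsClose (φ : Fla X) (b : Bool) (σ : X → Bool) (ε : ℝ) : Prop :=
  ∃ σ', eval σ' φ = b ∧ hamming φ σ σ' ≤ ε

/-- The children of the root. -/
def children : Fla X → List (Fla X)
  | and l => l
  | or l => l
  | gate _ l => l
  | _ => []

def isAnd : Fla X → Prop
  | and _ => True
  | _ => False

def isOr : Fla X → Prop
  | or _ => True
  | _ => False

/-- The `i`-th input of the `n`-ary gate `f` is `(a,b)`-forceful. -/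
def Forceful (f : List Bool → Bool) (n i : ℕ) : Prop :=
  ∃ a b : Bool, ∀ l : List Bool, l.length = n → l[i]? = some a → f l = b

/-- An `n`-ary gate is unforceable if no input is forceful. -/
def Unforceable (f : List Bool → Bool) (n : ℕ) : Prop :=
  ∀ i < n, ¬ Forceful f n i

/-- `k`-`x`-basic formulas. -/
inductive KxBasic (k : ℕ) : Fla X → Prop where
  | leaf (x : X) : KxBasic k (.leaf x)
  | neg (x : X) : KxBasic k (.neg x)
  | and (l : List (Fla X)) : 2 ≤ l.length → (∀ φ ∈ l, KxBasic k φ) →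
      (∀ φ ∈ l, ¬ isAnd φ) → KxBasic k (.and l)
  | or (l : List (Fla X)) : 2 ≤ l.length → (∀ φ ∈ l, KxBasic k φ) →
      (∀ φ ∈ l, ¬ isOr φ) → KxBasic k (.or l)
  | gate (f : List Bool → Bool) (l : List (Fla X)) : 2 ≤ l.length → l.length ≤ k →
      Unforceable f l.length → (∀ φ ∈ l, KxBasic k φ) → KxBasic k (.gate f l)

/-- Basic formulas: only `∧`/`∨` gates, alternating, negations at leaves. -/
inductive BasicF : Fla X → Prop where
  | leaf (x : X) : BasicF (.leaf x)
  | neg (x : X) : BasicF (.neg x)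
  | and (l : List (Fla X)) : 2 ≤ l.length → (∀ φ ∈ l, BasicF φ) →
      (∀ φ ∈ l, ¬ isAnd φ) → BasicF (.and l)
  | or (l : List (Fla X)) : 2 ≤ l.length → (∀ φ ∈ l, BasicF φ) →
      (∀ φ ∈ l, ¬ isOr φ) → BasicF (.or l)

end Fla

namespace Fla
variable {X : Type}

/-- The sizes of the children of the root, sorted in non-increasing order. -/
def sortedChildSizes (φ : Fla X) : List ℕ :=
  ((children φ).map size).mergeSort (fun a b => decide (b ≤ a))

open Classical in
/-- `ℓ(u,ε)`: the smallest `ℓ ≥ 1` such that the `ℓ`-th largest child of `u` has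
size less than `|Φ_u| (4k/ε)^{-ℓ}` (i.e. `|Φ_u| (ε/4k)^{ℓ}`) if such an `ℓ`
exists among the children, and `k+1` otherwise. -/
noncomputable def ell (k : ℕ) (ε : ℝ) (φ : Fla X) : ℕ :=
  if h : ∃ i, 1 ≤ i ∧ i ≤ (sortedChildSizes φ).length ∧
      (((sortedChildSizes φ).getD (i - 1) 0 : ℝ) < (size φ : ℝ) * (ε / (4 * k)) ^ i)
  then Nat.find h else k + 1

/-- The number of heavy children of the root: the `ℓ-1` largest children are
heavy (all children, if there are fewer than `ℓ-1`). -/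
noncomputable def heavyCount (k : ℕ) (ε : ℝ) (φ : Fla X) : ℕ :=
  min (ell k ε φ - 1) (children φ).length

end Fla

namespace Fla
variable {X : Type}

lemma vars_and_eq (l : List (Fla X)) : vars (.and l) = l.flatMap vars := by simp [vars]
lemma vars_or_eq (l : List (Fla X)) : vars (.or l) = l.flatMap vars := by simp [vars]
lemma vars_gate_eq (f : List Bool → Bool) (l : List (Fla X)) :
    vars (.gate f l) = l.flatMap vars := by simp [vars]

lemma eval_and_eq (σ : X → Bool) (l : List (Fla X)) : eval σ (.and l) = l.all (eval σ) := by
  simp only [eval]; rw [Bool.eq_iff_iff]; simp [List.all_eq_true]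

lemma eval_or_eq (σ : X → Bool) (l : List (Fla X)) : eval σ (.or l) = l.any (eval σ) := by
  simp only [eval]; rw [Bool.eq_iff_iff]; simp [List.any_eq_true]

lemma eval_gate_eq (σ : X → Bool) (f : List Bool → Bool) (l : List (Fla X)) :
    eval σ (.gate f l) = f (l.map (eval σ)) := by simp [eval]

lemma eval_congr {k : ℕ} : ∀ {φ : Fla X}, KxBasic k φ →
    ∀ {σ σ' : X → Bool}, (∀ x ∈ vars φ, σ x = σ' x) → eval σ φ = eval σ' φ := by
  intro φ h
  induction h with
  | leaf x => intro σ σ' h; simp only [eval]; exact h x (by simp [vars])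
  | neg x => intro σ σ' h; simp only [eval]; rw [h x (by simp [vars])]
  | and l hlen hsub hna ih =>
    intro σ σ' h
    rw [eval_and_eq, eval_and_eq, Bool.eq_iff_iff]
    simp only [List.all_eq_true]
    exact forall_congr' fun ψ => forall_congr' fun hψ => by
      rw [ih ψ hψ (fun x hx => h x (by rw [vars_and_eq]; exact List.mem_flatMap.mpr ⟨ψ, hψ, hx⟩))]
  | or l hlen hsub hna ih =>
    intro σ σ' h
    rw [eval_or_eq, eval_or_eq, Bool.eq_iff_iff]
    simp only [List.any_eq_true]
    exact exists_congr fun ψ => and_congr_right fun hψ => by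
      rw [ih ψ hψ (fun x hx => h x (by rw [vars_or_eq]; exact List.mem_flatMap.mpr ⟨ψ, hψ, hx⟩))]
  | gate g l hlen hlek unf hsub ih =>
    intro σ σ' h
    rw [eval_gate_eq, eval_gate_eq]
    exact congrArg g (List.map_congr_left fun ψ hψ => ih ψ hψ
      (fun x hx => h x (by rw [vars_gate_eq]; exact List.mem_flatMap.mpr ⟨ψ, hψ, hx⟩)))

lemma vars_ne_nil {k : ℕ} : ∀ {φ : Fla X}, KxBasic k φ → vars φ ≠ [] := by
  intro φ h
  induction h with
  | leaf x => simp [vars]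
  | neg x => simp [vars]
  | and l hlen hsub hna ih =>
    have h0 : 0 < l.length := by omega
    obtain ⟨x, hx⟩ := List.exists_mem_of_ne_nil _ (ih _ (l.getElem_mem h0))
    rw [vars_and_eq]
    exact List.ne_nil_of_mem (List.mem_flatMap.mpr ⟨_, List.getElem_mem h0, hx⟩)
  | or l hlen hsub hna ih =>
    have h0 : 0 < l.length := by omega
    obtain ⟨x, hx⟩ := List.exists_mem_of_ne_nil _ (ih _ (l.getElem_mem h0))
    rw [vars_or_eq]
    exact List.ne_nil_of_mem (List.mem_flatMap.mpr ⟨_, List.getElem_mem h0, hx⟩)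
  | gate g l hlen hlek unf hsub ih =>
    have h0 : 0 < l.length := by omega
    obtain ⟨x, hx⟩ := List.exists_mem_of_ne_nil _ (ih _ (l.getElem_mem h0))
    rw [vars_gate_eq]
    exact List.ne_nil_of_mem (List.mem_flatMap.mpr ⟨_, List.getElem_mem h0, hx⟩)

lemma size_pos {k : ℕ} {φ : Fla X} (h : KxBasic k φ) : 0 < size φ :=
  List.length_pos_iff.mpr (vars_ne_nil h)

/-- Realize a vector of target values (given per-index as `Option Bool`, `none`
meaning "don't care") on a list of formulas with pairwise disjoint variables. -/
lemma realize_list {k : ℕ} :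
    ∀ (l : List (Fla X)), (∀ φ ∈ l, KxBasic k φ) →
    (∀ φ ∈ l, ∀ (b : Bool) (σ : X → Bool), ∃ σ', eval σ' φ = b ∧ ∀ x, x ∉ vars φ → σ' x = σ x) →
    List.Pairwise (fun φ ψ => (vars φ).Disjoint (vars ψ)) l →
    ∀ (t : List (Option Bool)) (σ : X → Bool),
    ∃ σ' : X → Bool,
      (∀ (j : ℕ) (hj : j < l.length) (c : Bool), t[j]? = some (some c) → eval σ' l[j] = c) ∧
      (∀ x : X, (∀ (j : ℕ) (hj : j < l.length) (c : Bool), t[j]? = some (some c) → x ∉ vars l[j]) →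
        σ' x = σ x) := by
  intro l
  induction l with
  | nil =>
    intro _ _ _ t σ
    exact ⟨σ, fun j hj => by simp at hj, fun x _ => rfl⟩
  | cons φ l ih =>
    intro hk hre hdisj t σ
    obtain ⟨hd, hdisj'⟩ := List.pairwise_cons.mp hdisj
    have hk' : ∀ ψ ∈ l, KxBasic k ψ := fun ψ h => hk ψ (List.mem_cons_of_mem _ h)
    have hre' := fun ψ h => hre ψ (List.mem_cons_of_mem _ h)
    match t with
    | [] =>
      refine ⟨σ, ?_, fun x _ => rfl⟩
      intro j hj c hc; simp at hc
    | o :: t' =>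
      obtain ⟨σ₁, h1, h2⟩ := ih hk' hre' hdisj' t' σ
      match o with
      | none =>
        refine ⟨σ₁, ?_, ?_⟩
        · intro j hj c hc
          match j with
          | 0 => simp at hc
          | j+1 => exact h1 j (by simpa using hj) c (by simpa using hc)
        · intro x hx
          exact h2 x (fun j hj c hc => hx (j+1) (by simpa using hj) c (by simpa using hc))
      | some c0 =>
        obtain ⟨σ₂, e2, u2⟩ := hre φ (List.mem_cons_self) c0 σ₁
        refine ⟨σ₂, ?_, ?_⟩
        · intro j hj c hc
          match j with
          | 0 =>
            have : c = c0 := by simpa using hc.symm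
            subst this
            simpa using e2
          | j+1 =>
            have hj' : j < l.length := by simpa using hj
            have heq : eval σ₂ l[j] = eval σ₁ l[j] :=
              eval_congr (hk' _ (l.getElem_mem hj'))
                (fun x hx => u2 x (fun hmem => (hd _ (l.getElem_mem hj')) hmem hx))
            rw [List.getElem_cons_succ, heq]
            exact h1 j hj' c (by simpa using hc)
        · intro x hx
          have hxφ : x ∉ vars φ := hx 0 (by simp) c0 (by simp)
          rw [u2 x hxφ]
          exact h2 x (fun j hj c hc => hx (j+1) (by simpa using hj) c (by simpa using hc))

/-- Every read-once `k`-`x`-basic formula can be made to evaluate to any value,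
changing the assignment only on its own variables. -/
lemma realize {k : ℕ} : ∀ {φ : Fla X}, KxBasic k φ → ReadOnce φ →
    ∀ (b : Bool) (σ : X → Bool), ∃ σ', eval σ' φ = b ∧ ∀ x, x ∉ vars φ → σ' x = σ x := by
  classical
  intro φ h
  induction h with
  | leaf y =>
    intro _ b σ
    refine ⟨fun z => if z = y then b else σ z, by simp [eval], ?_⟩
    intro x hx
    show (if x = y then b else σ x) = σ x
    rw [if_neg]
    intro hxy; exact hx (by simp [vars, hxy])
  | neg y =>
    intro _ b σ
    refine ⟨fun z => if z = y then !b else σ z, by simp [eval], ?_⟩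
    intro x hx
    show (if x = y then !b else σ x) = σ x
    rw [if_neg]
    intro hxy; exact hx (by simp [vars, hxy])
  | and l hlen hsub hna ih =>
    intro hro b σ
    have hro2 : (l.flatMap vars).Nodup := by
      have h' : (vars (Fla.and l)).Nodup := hro
      rwa [vars_and_eq] at h'
    obtain ⟨hnod, hdisj0⟩ := List.nodup_flatMap.mp hro2
    have hdisj : List.Pairwise (fun φ ψ => (vars φ).Disjoint (vars ψ)) l :=
      hdisj0.imp fun h => h
    have hre : ∀ ψ ∈ l, ∀ (b : Bool) (σ0 : X → Bool),
        ∃ σ', eval σ' ψ = b ∧ ∀ x, x ∉ vars ψ → σ' x = σ0 x :=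
      fun ψ hm => ih ψ hm (hnod ψ hm)
    have h0 : 0 < l.length := by omega
    cases b with
    | true =>
      obtain ⟨σ', h1, h2⟩ := realize_list l hsub hre hdisj (List.replicate l.length (some true)) σ
      refine ⟨σ', ?_, ?_⟩
      · rw [eval_and_eq, List.all_eq_true]
        intro ψ hψ
        obtain ⟨j, hj, rfl⟩ := List.mem_iff_getElem.mp hψ
        exact h1 j hj true (by simp [hj])
      · intro x hx
        refine h2 x (fun j hj c _ hmem => hx ?_)
        rw [vars_and_eq]; exact List.mem_flatMap.mpr ⟨_, List.getElem_mem hj, hmem⟩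
    | false =>
      obtain ⟨σ', h1, h2⟩ := realize_list l hsub hre hdisj [some false] σ
      refine ⟨σ', ?_, ?_⟩
      · rw [eval_and_eq]
        exact List.all_eq_false.mpr ⟨l[0], List.getElem_mem h0,
          by rw [h1 0 h0 false (by simp)]; simp⟩
      · intro x hx
        refine h2 x (fun j hj c _ hmem => hx ?_)
        rw [vars_and_eq]; exact List.mem_flatMap.mpr ⟨_, List.getElem_mem hj, hmem⟩
  | or l hlen hsub hna ih =>
    intro hro b σ
    have hro2 : (l.flatMap vars).Nodup := by
      have h' : (vars (Fla.or l)).Nodup := hro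
      rwa [vars_or_eq] at h'
    obtain ⟨hnod, hdisj0⟩ := List.nodup_flatMap.mp hro2
    have hdisj : List.Pairwise (fun φ ψ => (vars φ).Disjoint (vars ψ)) l :=
      hdisj0.imp fun h => h
    have hre : ∀ ψ ∈ l, ∀ (b : Bool) (σ0 : X → Bool),
        ∃ σ', eval σ' ψ = b ∧ ∀ x, x ∉ vars ψ → σ' x = σ0 x :=
      fun ψ hm => ih ψ hm (hnod ψ hm)
    have h0 : 0 < l.length := by omega
    cases b with
    | false =>
      obtain ⟨σ', h1, h2⟩ := realize_list l hsub hre hdisj (List.replicate l.length (some false)) σ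
      refine ⟨σ', ?_, ?_⟩
      · rw [eval_or_eq]
        rw [List.any_eq_false]
        intro ψ hψ
        obtain ⟨j, hj, rfl⟩ := List.mem_iff_getElem.mp hψ
        rw [h1 j hj false (by simp [hj])]; simp
      · intro x hx
        refine h2 x (fun j hj c _ hmem => hx ?_)
        rw [vars_or_eq]; exact List.mem_flatMap.mpr ⟨_, List.getElem_mem hj, hmem⟩
    | true =>
      obtain ⟨σ', h1, h2⟩ := realize_list l hsub hre hdisj [some true] σ
      refine ⟨σ', ?_, ?_⟩
      · rw [eval_or_eq]
        exact List.any_eq_true.mpr ⟨l[0], List.getElem_mem h0, h1 0 h0 true (by simp)⟩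
      · intro x hx
        refine h2 x (fun j hj c _ hmem => hx ?_)
        rw [vars_or_eq]; exact List.mem_flatMap.mpr ⟨_, List.getElem_mem hj, hmem⟩
  | gate g l hlen hlek unf hsub ih =>
    intro hro b σ
    have hro2 : (l.flatMap vars).Nodup := by
      have h' : (vars (Fla.gate g l)).Nodup := hro
      rwa [vars_gate_eq] at h'
    obtain ⟨hnod, hdisj0⟩ := List.nodup_flatMap.mp hro2
    have hdisj : List.Pairwise (fun φ ψ => (vars φ).Disjoint (vars ψ)) l :=
      hdisj0.imp fun h => h
    have hre : ∀ ψ ∈ l, ∀ (b : Bool) (σ0 : X → Bool),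
        ∃ σ', eval σ' ψ = b ∧ ∀ x, x ∉ vars ψ → σ' x = σ0 x :=
      fun ψ hm => ih ψ hm (hnod ψ hm)
    have h0 : 0 < l.length := by omega
    have hnf := unf 0 h0
    unfold Forceful at hnf
    push_neg at hnf
    obtain ⟨v, hv1, hv2, hv3⟩ := hnf true (!b)
    have hfb : g v = b := by cases hb : g v <;> cases b <;> simp_all
    obtain ⟨σ', h1, h2⟩ := realize_list l hsub hre hdisj (v.map some) σ
    refine ⟨σ', ?_, ?_⟩
    · rw [eval_gate_eq]
      have hmapv : l.map (eval σ') = v := by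
        apply List.ext_getElem (by simp [hv1])
        intro j hj1 hj2
        rw [List.getElem_map]
        exact h1 j (by simpa using hj1) (v[j])
          (by rw [List.getElem?_map, List.getElem?_eq_getElem hj2]; rfl)
      rw [hmapv, hfb]
    · intro x hx
      refine h2 x (fun j hj c _ hmem => hx ?_)
      rw [vars_gate_eq]; exact List.mem_flatMap.mpr ⟨_, List.getElem_mem hj, hmem⟩

lemma sum_le_except (M : ℕ) : ∀ (L : List ℕ) (j : ℕ) (hj : j < L.length),
    (∀ i (hi : i < L.length), i ≠ j → L[i] ≤ M) → L.sum ≤ L[j] + (L.length - 1) * M := by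
  intro L
  induction L with
  | nil => intro j hj; simp at hj
  | cons a L ih =>
    intro j hj hb
    match j with
    | 0 =>
      simp only [List.sum_cons, List.getElem_cons_zero, List.length_cons, Nat.add_sub_cancel]
      have hsum : L.sum ≤ L.length * M := by
        have := List.sum_le_card_nsmul L M (fun x hx => by
          obtain ⟨i, hi, rfl⟩ := List.mem_iff_getElem.mp hx
          exact hb (i+1) (by simpa using hi) (by omega))
        simpa [smul_eq_mul] using this
      omega
    | j+1 =>
      have hj' : j < L.length := by simpa using hj
      have hL := ih j hj' (fun i hi hne => hb (i+1) (by simpa using hi) (by omega))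
      have ha : a ≤ M := hb 0 (by simp) (by omega)
      simp only [List.sum_cons, List.getElem_cons_succ, List.length_cons, Nat.add_sub_cancel]
      have h1 : 1 ≤ L.length := by omega
      have hmul : L.length * M = (L.length - 1) * M + M := by
        calc L.length * M = (L.length - 1 + 1) * M := by rw [Nat.sub_add_cancel h1]
          _ = (L.length - 1) * M + M := by rw [Nat.succ_mul]
      omega

lemma two_le_countP {α : Type} (p : α → Bool) : ∀ (L : List α) (i j : ℕ)
    (hi : i < L.length) (hj : j < L.length), i < j →
    p L[i] = true → p L[j] = true → 2 ≤ L.countP p := by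
  intro L
  induction L with
  | nil => intro i j hi; simp at hi
  | cons a L ih =>
    intro i j hi hj hij hpi hpj
    match i, j with
    | 0, j+1 =>
      rw [List.countP_cons_of_pos (by simpa using hpi)]
      have hpos : 0 < L.countP p := List.countP_pos_iff.mpr
        ⟨L[j]'(by simpa using hj), List.getElem_mem _, by simpa using hpj⟩
      omega
    | i+1, j+1 =>
      have h2 := ih i j (by simpa using hi) (by simpa using hj) (by omega)
        (by simpa using hpi) (by simpa using hpj)
      refine le_trans h2 ?_
      rw [List.countP_cons]
      exact Nat.le_add_right _ _

open Classical in
lemma ell_spec (k : ℕ) (ε : ℝ) (φ : Fla X) :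
    ell k ε φ = k + 1 ∨ (1 ≤ ell k ε φ ∧ ell k ε φ ≤ (sortedChildSizes φ).length ∧
      ((sortedChildSizes φ).getD (ell k ε φ - 1) 0 : ℝ) <
        (size φ : ℝ) * (ε / (4 * k)) ^ (ell k ε φ)) := by
  unfold ell
  split
  · next h => exact Or.inr (Nat.find_spec h)
  · exact Or.inl rfl

end Fla

open Fla in
/-- in a `k`-`x`-basic read-once formula, an unforceable-gate
vertex from which `σ` is `ε`-far from evaluating to `b` has at least two heavy
children. -/
theorem unforceable_two_heavy_children {X : Type} (k : ℕ) (f : List Bool → Bool)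
    (l : List (Fla X)) (Φu : Fla X) (hΦ : Φu = Fla.gate f l)
    (hbasic : KxBasic k Φu) (hro : Φu.ReadOnce)
    (σ : X → Bool) (b : Bool) (ε : ℝ) (hε : 0 < ε)
    (hfar : EpsFar Φu b σ ε) :
    2 ≤ heavyCount k ε Φu := by
  classical
  subst hΦ
  have hfields : 2 ≤ l.length ∧ l.length ≤ k ∧ Unforceable f l.length ∧
      ∀ φ ∈ l, KxBasic k φ := by
    cases hbasic with | gate f l h1 h2 h3 h4 => exact ⟨h1, h2, h3, h4⟩
  obtain ⟨hn2, hnk, unf, hsub⟩ := hfields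
  have hk2 : 2 ≤ k := le_trans hn2 hnk
  have hro2 : (l.flatMap vars).Nodup := by
    have h' : (vars (Fla.gate f l)).Nodup := hro
    rwa [vars_gate_eq] at h'
  obtain ⟨hnod, hdisj0⟩ := List.nodup_flatMap.mp hro2
  have hdisj : List.Pairwise (fun φ ψ => (vars φ).Disjoint (vars ψ)) l :=
    hdisj0.imp fun h => h
  have hre : ∀ ψ ∈ l, ∀ (b : Bool) (σ0 : X → Bool),
      ∃ σ', eval σ' ψ = b ∧ ∀ x, x ∉ vars ψ → σ' x = σ0 x :=
    fun ψ hm => realize (hsub ψ hm) (hnod ψ hm)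
  have hSpos : 0 < size (Fla.gate f l) := size_pos hbasic
  have hS' : (0:ℝ) < (size (Fla.gate f l) : ℝ) := by exact_mod_cast hSpos
  -- ε ≤ 1
  have hε1 : ε ≤ 1 := by
    obtain ⟨σ', hb', -⟩ := realize hbasic hro b σ
    refine le_trans (hfar σ' hb') ?_
    show ((vars (Fla.gate f l)).countP (fun x => σ x != σ' x) : ℝ) /
      (size (Fla.gate f l) : ℝ) ≤ 1
    rw [div_le_one hS']
    exact_mod_cast List.countP_le_length
  show 2 ≤ min (ell k ε (Fla.gate f l) - 1) l.length
  refine le_min ?_ hn2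
  rcases ell_spec k ε (Fla.gate f l) with he | ⟨hi1, hi2, hi3⟩
  · rw [he]; omega
  · set i := ell k ε (Fla.gate f l) with hidef
    by_contra hcon
    push_neg at hcon
    have hile : i ≤ 2 := by omega
    clear hcon
    -- sorted list facts
    have hperm : (sortedChildSizes (Fla.gate f l)).Perm (l.map size) :=
      List.mergeSort_perm (l.map size) _
    set sorted := sortedChildSizes (Fla.gate f l) with hsorteddef
    have hslen : sorted.length = l.length := by rw [hperm.length_eq, List.length_map]
    have hpair : List.Pairwise (fun a b => b ≤ a) sorted := by
      have hms := List.pairwise_mergeSort (le := fun a b : ℕ => decide (b ≤ a))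
        (fun a b c hab hbc => by simp only [decide_eq_true_eq] at *; omega)
        (fun a b => by simp [Nat.le_total b a]) (l.map size)
      exact hms.imp (fun h => by simpa using h)
    have hne : sorted ≠ [] := by
      intro h; rw [h] at hslen; simp at hslen; omega
    obtain ⟨s0, rest, h0⟩ := List.exists_cons_of_ne_nil hne
    have hrne : rest ≠ [] := by
      intro h; rw [h] at h0; rw [h0] at hslen; simp at hslen; omega
    obtain ⟨s1, r, h1r⟩ := List.exists_cons_of_ne_nil hrne
    rw [h1r] at h0
    have hmax : ∀ m ∈ l.map size, m ≤ s0 := by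
      intro m hm
      have hms : m ∈ sorted := hperm.mem_iff.mpr hm
      rw [h0] at hms hpair
      rcases List.mem_cons.mp hms with rfl | hmem
      · exact le_refl _
      · exact (List.pairwise_cons.mp hpair).1 m hmem
    have hs0mem : s0 ∈ l.map size := hperm.mem_iff.mp (by rw [h0]; exact List.mem_cons_self)
    obtain ⟨φ1, hφ1mem, hφ1⟩ := List.mem_map.mp hs0mem
    obtain ⟨j, hj, hjeq⟩ := List.mem_iff_getElem.mp hφ1mem
    have hjsize : size l[j] = s0 := by rw [hjeq, hφ1]
    set M := sorted.getD (i - 1) 0 with hMdef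
    -- all children other than j have size at most M
    have hMbound : ∀ j' (hj' : j' < l.length), j' ≠ j → size l[j'] ≤ M := by
      intro j' hj' hne'
      have hmem' : size l[j'] ∈ l.map size :=
        List.mem_map.mpr ⟨l[j'], List.getElem_mem hj', rfl⟩
      rcases (by omega : i = 1 ∨ i = 2) with hi | hi
      · have : M = s0 := by rw [hMdef, hi, h0]; rfl
        rw [this]; exact hmax _ hmem'
      · have hMs1 : M = s1 := by rw [hMdef, hi, h0]; rfl
        rw [hMs1]
        by_contra hgt
        push_neg at hgt
        have hp1 : s1 < size l[j] := lt_of_lt_of_le hgt (hjsize ▸ hmax _ hmem')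
        have h2c : 2 ≤ (l.map size).countP (fun m => decide (s1 < m)) := by
          rcases lt_or_gt_of_ne hne' with hlt | hlt
          · exact two_le_countP _ (l.map size) j' j (by simpa using hj')
              (by simpa using hj) hlt
              (by rw [List.getElem_map]; simpa using hgt)
              (by rw [List.getElem_map]; simpa using hp1)
          · exact two_le_countP _ (l.map size) j j' (by simpa using hj)
              (by simpa using hj') hlt
              (by rw [List.getElem_map]; simpa using hp1)
              (by rw [List.getElem_map]; simpa using hgt)
        have hle1 : (l.map size).countP (fun m => decide (s1 < m)) ≤ 1 := by
          rw [← hperm.countP_eq, h0]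
          have hp2 : List.Pairwise (fun a b : ℕ => b ≤ a) (s1 :: r) := by
            have := hpair; rw [h0] at this
            exact (List.pairwise_cons.mp this).2
          have hz : (s1 :: r).countP (fun m => decide (s1 < m)) = 0 := by
            refine List.countP_eq_zero.mpr ?_
            intro a ha
            simp only [decide_eq_true_eq, not_lt]
            rcases List.mem_cons.mp ha with rfl | hmem
            · exact le_refl _
            · exact (List.pairwise_cons.mp hp2).1 a hmem
          rw [List.countP_cons, hz]
          split <;> omega
        omega
    -- construct a close assignment making the gate output b
    have hnf := unf j (by omega : j < l.length)
    unfold Forceful at hnf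
    push_neg at hnf
    obtain ⟨v, hv1, hv2, hv3⟩ := hnf (eval σ l[j]) (!b)
    have hfb : f v = b := by cases hb2 : f v <;> cases b <;> simp_all
    set t := (v.map some).set j none with htdef
    obtain ⟨σ', h1, h2⟩ := realize_list l hsub hre hdisj t σ
    have htj : ∀ j' (hj' : j' < l.length), j' ≠ j →
        t[j']? = some (some (v[j']'(by omega))) := by
      intro j' hj' hne'
      rw [htdef, List.getElem?_set_ne (Ne.symm hne'), List.getElem?_map,
        List.getElem?_eq_getElem (by omega : j' < v.length)]
      rfl
    have hunch : ∀ x ∈ vars l[j], σ' x = σ x := by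
      intro x hx
      apply h2
      intro j2 hj2 c hc
      by_cases hej : j2 = j
      · subst hej
        rw [htdef, List.getElem?_set_self (by rw [List.length_map]; omega)] at hc
        simp at hc
      · intro hmem
        have hpg := List.pairwise_iff_getElem.mp hdisj
        rcases lt_or_gt_of_ne hej with hlt | hlt
        · exact hpg j2 j hj2 hj hlt hmem hx
        · exact hpg j j2 hj hj2 hlt hx hmem
    have hevalj : eval σ' l[j] = eval σ l[j] :=
      eval_congr (hsub _ (List.getElem_mem hj)) (fun x hx => hunch x hx)
    have hmapv : l.map (eval σ') = v := by
      apply List.ext_getElem (by rw [List.length_map]; omega)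
      intro j2 h2a h2b
      rw [List.getElem_map]
      by_cases hej : j2 = j
      · subst hej
        rw [hevalj]
        rw [List.getElem?_eq_getElem (by omega : j2 < v.length)] at hv2
        exact (Option.some.inj hv2).symm
      · exact h1 j2 (by simpa using h2a) _ (htj j2 (by simpa using h2a) hej)
    have hevalb : eval σ' (Fla.gate f l) = b := by rw [eval_gate_eq, hmapv, hfb]
    have hfar' := hfar σ' hevalb
    set p : X → Bool := fun x => σ x != σ' x with hpdef
    -- counting the changed variables
    have hcount : (vars (Fla.gate f l)).countP p ≤ (l.length - 1) * M := by
      rw [vars_gate_eq, List.countP_flatMap]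
      have hLlen : (l.map (List.countP p ∘ vars)).length = l.length := by
        rw [List.length_map]
      have hLj : (l.map (List.countP p ∘ vars))[j]'(by omega) = 0 := by
        simp only [List.getElem_map]
        refine List.countP_eq_zero.mpr ?_
        intro x hx
        have := hunch x hx
        simp [hpdef, this]
      have hsle := sum_le_except M (l.map (List.countP p ∘ vars)) j (by omega)
        (fun i2 hi2 hne2 => by
          simp only [List.getElem_map]
          exact le_trans (List.countP_le_length)
            (hMbound i2 (by rw [hLlen] at hi2; exact hi2) hne2))
      rw [hLj, hLlen] at hsle
      simpa using hsle
    -- real arithmetic contradiction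
    have hham : hamming (Fla.gate f l) σ σ' =
        ((vars (Fla.gate f l)).countP p : ℝ) / (size (Fla.gate f l) : ℝ) := rfl
    rw [hham, le_div_iff₀ hS'] at hfar'
    have hchain : ((vars (Fla.gate f l)).countP p : ℝ) ≤ ((l.length - 1 : ℕ) : ℝ) * (M : ℝ) := by
      exact_mod_cast hcount
    have hk0 : (0:ℝ) < 4 * (k:ℝ) := by
      have : (2:ℝ) ≤ (k:ℝ) := by exact_mod_cast hk2
      linarith
    have hx0 : (0:ℝ) ≤ ε / (4 * k) := le_of_lt (div_pos hε hk0)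
    have hxle1 : ε / (4 * k) ≤ 1 := by
      rw [div_le_one hk0]
      have : (2:ℝ) ≤ (k:ℝ) := by exact_mod_cast hk2
      linarith
    have hpowle : (ε / (4 * k)) ^ i ≤ ε / (4 * k) := by
      rcases (by omega : i = 1 ∨ i = 2) with hi | hi <;> rw [hi]
      · rw [pow_one]
      · rw [pow_two]; nlinarith
    have hn1pos : (0:ℝ) < ((l.length - 1 : ℕ) : ℝ) := by
      have : 1 ≤ l.length - 1 := by omega
      exact_mod_cast Nat.lt_of_lt_of_le Nat.zero_lt_one this
    have hn1k : ((l.length - 1 : ℕ) : ℝ) ≤ (k:ℝ) := by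
      have : l.length - 1 ≤ k := by omega
      exact_mod_cast this
    have h1r : ((l.length - 1 : ℕ) : ℝ) * (M:ℝ) <
        ((l.length - 1 : ℕ) : ℝ) * ((size (Fla.gate f l) : ℝ) * (ε / (4 * k)) ^ i) :=
      mul_lt_mul_of_pos_left hi3 hn1pos
    have h2r : ((l.length - 1 : ℕ) : ℝ) * ((size (Fla.gate f l) : ℝ) * (ε / (4 * k)) ^ i) ≤
        (k:ℝ) * ((size (Fla.gate f l) : ℝ) * (ε / (4 * k))) := by
      apply mul_le_mul hn1k ?_ ?_ (by positivity)
      · exact mul_le_mul_of_nonneg_left hpowle (le_of_lt hS')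
      · positivity
    have h3r : (k:ℝ) * ((size (Fla.gate f l) : ℝ) * (ε / (4 * k))) =
        (size (Fla.gate f l) : ℝ) * ε / 4 := by
      field_simp
    nlinarith [mul_pos hε hS']
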